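/- Let G be a group acting continuously on the right on a topological space M, and let P_G(M) = ⨆_{g ∈ G} P_g(M) × {g} carry the right G-action ((γ, g), h) ↦ (γ_h, h⁻¹gh) where γ_h(t) = γ(t)·h, and the ℝ-action s·(γ, k) := (s·γ, k) with (s·γ)(t) = γ(t + s − ⌊t+s⌋)·k^{⌊t+s⌋}. Then the ℝ-action descends to a well-defined continuous action of ℝ on the orbit space P_G(M)/G, and this induced action factors through the quotient group ℝ/ℤ; that is, for every (γ, k) ∈ P_G(M), the elements 1·(γ, k) and (γ, k) lie in the same G-orbit (indeed 1·(γ,k) = (γ,k)·k), so P_G(M)/G carries a natural action of the circle S¹ = ℝ/ℤ. -/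

import Mathlib

set_option linter.unusedSectionVars false

/-- The space `P_g(M) = {γ ∈ C([0,1], M) : γ(0)·g = γ(1)}` with the compact-open topology. -/
abbrev PSp {M G : Type*} [TopologicalSpace M] (act : M → G → M) (g : G) : Type _ :=
  {γ : C(unitInterval, M) // act (γ 0) g = γ 1}

/-- The rotation `(s·γ)(t) := γ(t + s − ⌊t + s⌋)·k^⌊t+s⌋` at the level of functions. -/
noncomputable def rotFn {M G : Type*} [Group G] (act : M → G → M) (k : G) (s : ℝ)
    (γ : unitInterval → M) : unitInterval → M :=
  fun t =>
    act (γ ⟨Int.fract ((t : ℝ) + s), Int.fract_nonneg _, (Int.fract_lt_one _).le⟩)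
      (k ^ ⌊(t : ℝ) + s⌋)

/-- The orbit equivalence relation on `P_G(M) = Σ g, P_g(M)` induced by the right G-action
`((γ, g), h) ↦ (γ_h, h⁻¹gh)` where `γ_h(t) = γ(t)·h`. -/
def rG {M G : Type*} [TopologicalSpace M] [Group G] (act : M → G → M) :
    (Σ g : G, PSp act g) → (Σ g : G, PSp act g) → Prop :=
  fun p q => ∃ h : G, q.1 = h⁻¹ * p.1 * h ∧ ∀ t, q.2.1 t = act (p.2.1 t) h

section aux
variable {M G : Type*} [TopologicalSpace M] [Group G] (act : M → G → M)

/-- `rotAt γ k x = γ(fract x)·k^⌊x⌋`. -/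
noncomputable def rotAt (γ : unitInterval → M) (k : G) (x : ℝ) : M :=
  act (γ ⟨Int.fract x, Int.fract_nonneg _, (Int.fract_lt_one _).le⟩) (k ^ ⌊x⌋)

section withMul
variable (hmul : ∀ x g h, act (act x g) h = act x (g * h))
include hmul

lemma act_zpow_add (x : M) (k : G) (a b : ℤ) :
    act x (k ^ (a + b)) = act (act x (k ^ a)) (k ^ b) := by rw [zpow_add, hmul]

lemma rotAt_add_int (γ : unitInterval → M) (k : G) (x : ℝ) (m : ℤ) :
    rotAt act γ k (x + m) = act (rotAt act γ k x) (k ^ m) := by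
  simp only [rotAt, Int.fract_add_intCast, Int.floor_add_intCast]
  exact act_zpow_add act hmul _ _ _ _

lemma rotAt_add_one (γ : unitInterval → M) (k : G) (x : ℝ) :
    rotAt act γ k (x + 1) = act (rotAt act γ k x) k := by
  have := rotAt_add_int act hmul γ k x 1
  simpa using this

lemma rotAt_conj (γ δ : unitInterval → M) (g h : G)
    (hd : ∀ t, δ t = act (γ t) h) (x : ℝ) :
    rotAt act δ (h⁻¹ * g * h) x = act (rotAt act γ g x) h := by
  have hconj : (h⁻¹ * g * h) ^ ⌊x⌋ = h⁻¹ * g ^ ⌊x⌋ * h := by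
    have := map_zpow (MulAut.conj h⁻¹) g ⌊x⌋
    simp only [MulAut.conj_apply, inv_inv] at this
    exact this.symm
  unfold rotAt
  rw [hd, hmul, hconj, hmul]
  congr 1
  group
end withMul

section withOne
variable (hone : ∀ x, act x 1 = x)
include hone

lemma rotAt_coe (g : G) (γ : PSp act g) (t : unitInterval) :
    rotAt act (⇑γ.1) g ((t : ℝ)) = γ.1 t := by
  rcases lt_or_eq_of_le t.2.2 with h | h
  · have hfr : Int.fract (t : ℝ) = (t : ℝ) := Int.fract_eq_self.2 ⟨t.2.1, h⟩
    have hfl : ⌊(t : ℝ)⌋ = 0 := Int.floor_eq_zero_iff.2 ⟨t.2.1, h⟩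
    simp only [rotAt, hfr, hfl, zpow_zero, hone, Subtype.coe_eta]
  · have ht : t = 1 := Subtype.ext h
    rw [ht]
    show rotAt act (⇑γ.1) g (1 : ℝ) = γ.1 1
    simp only [rotAt, Int.fract_one, Int.floor_one, zpow_one]
    exact γ.2

lemma rotAt_rot (hmul : ∀ x g h, act (act x g) h = act x (g * h))
    (δ : unitInterval → M) (k : G) (x s' : ℝ) :
    rotAt act (fun u : unitInterval => rotAt act δ k ((u : ℝ) + s')) k x
      = rotAt act δ k (x + s') := by
  show act (rotAt act δ k (Int.fract x + s')) (k ^ ⌊x⌋) = _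
  have h1 : Int.fract x + s' = (x + s') + ((-⌊x⌋ : ℤ) : ℝ) := by
    rw [← Int.self_sub_floor]; push_cast; ring
  rw [h1, rotAt_add_int act hmul, hmul, ← zpow_add, neg_add_cancel, zpow_zero, hone]
end withOne

section contSec
variable (hcont : ∀ g : G, Continuous fun x => act x g)
variable (hmul : ∀ x g h, act (act x g) h = act x (g * h))
include hcont hmul

lemma rot_cont (k : G) (s : ℝ) :
    Continuous fun p : PSp act k × unitInterval => rotAt act (⇑p.1.1) k ((p.2 : ℝ) + s) := by
  set n : ℤ := ⌊s⌋ with hn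
  have key : ∀ p : PSp act k × unitInterval,
      rotAt act (⇑p.1.1) k ((p.2 : ℝ) + s) =
      if ((p.2 : ℝ) + s) ≤ (n : ℝ) + 1 then
        act (p.1.1 (Set.projIcc 0 1 zero_le_one ((p.2 : ℝ) + s - n))) (k ^ n)
      else
        act (p.1.1 (Set.projIcc 0 1 zero_le_one ((p.2 : ℝ) + s - ((n : ℝ) + 1)))) (k ^ (n + 1)) := by
    rintro ⟨⟨γ, hγ⟩, t⟩
    dsimp only
    set x : ℝ := (t : ℝ) + s with hx
    have hx0 : (n : ℝ) ≤ x := le_add_of_nonneg_of_le t.2.1 (Int.floor_le s)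
    have hx2 : x < (n : ℝ) + 1 + 1 := by
      have h1 : (t : ℝ) ≤ 1 := t.2.2
      have h2 : s < (n : ℝ) + 1 := Int.lt_floor_add_one s
      linarith
    split_ifs with h
    · rcases eq_or_lt_of_le h with heq | hlt
      · have hxe : x = ((n + 1 : ℤ) : ℝ) := by push_cast; linarith
        have hfr : Int.fract x = 0 := by rw [hxe, Int.fract_intCast]
        have hfl : ⌊x⌋ = n + 1 := by rw [hxe, Int.floor_intCast]
        have hsub : x - (n : ℝ) = 1 := by linarith
        rw [rotAt]
        simp only [hfr, hfl, hsub, Set.projIcc_right]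
        show act (γ 0) (k ^ (n + 1)) = act (γ 1) (k ^ n)
        rw [← hγ, hmul, add_comm, zpow_one_add]
      · have hfl : ⌊x⌋ = n := Int.floor_eq_iff.2 ⟨hx0, by push_cast; linarith⟩
        have hfr : Int.fract x = x - n := by rw [← Int.self_sub_floor, hfl]
        have hmem : x - (n : ℝ) ∈ Set.Icc (0 : ℝ) 1 := ⟨by linarith, by linarith⟩
        rw [rotAt, Set.projIcc_of_mem zero_le_one hmem]
        simp only [hfr, hfl]
    · push_neg at h
      have hfl : ⌊x⌋ = n + 1 := Int.floor_eq_iff.2 ⟨by push_cast; linarith, by push_cast; linarith⟩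
      have hfr : Int.fract x = x - ((n : ℝ) + 1) := by
        rw [← Int.self_sub_floor, hfl]; push_cast; ring
      have hmem : x - ((n : ℝ) + 1) ∈ Set.Icc (0 : ℝ) 1 := ⟨by linarith, by linarith⟩
      rw [rotAt, Set.projIcc_of_mem zero_le_one hmem]
      simp only [hfr, hfl]
  rw [funext key]
  have hc1 : Continuous fun p : PSp act k × unitInterval => (p.1.1 : C(unitInterval, M)) :=
    continuous_subtype_val.comp continuous_fst
  have harg : Continuous fun p : PSp act k × unitInterval => ((p.2 : ℝ) + s) :=
    (continuous_subtype_val.comp continuous_snd).add continuous_const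
  have hproj : Continuous (Set.projIcc (0 : ℝ) 1 zero_le_one) := continuous_projIcc
  apply Continuous.if_le
  · exact (hcont _).comp (continuous_eval.comp (hc1.prodMk
      (hproj.comp (harg.sub continuous_const))))
  · exact (hcont _).comp (continuous_eval.comp (hc1.prodMk
      (hproj.comp (harg.sub continuous_const))))
  · exact harg
  · exact continuous_const
  · rintro ⟨⟨γ, hγ⟩, t⟩ hb
    dsimp only at hb ⊢
    have hsub1 : (t : ℝ) + s - (n : ℝ) = 1 := by linarith
    have hsub0 : (t : ℝ) + s - ((n : ℝ) + 1) = 0 := by linarith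
    rw [hsub1, hsub0, Set.projIcc_right, Set.projIcc_left]
    show act (γ 1) (k ^ n) = act (γ 0) (k ^ (n + 1))
    rw [← hγ, hmul, add_comm, ← zpow_one_add]

/-- The rotation as a map `P_k(M) → P_k(M)`. -/
noncomputable def rotP (k : G) (s : ℝ) (γ : PSp act k) : PSp act k :=
  ⟨⟨fun t => rotAt act (⇑γ.1) k ((t : ℝ) + s),
      (rot_cont act hcont hmul k s).comp (Continuous.prodMk_right γ)⟩, by
    show act (rotAt act (⇑γ.1) k ((0 : ℝ) + s)) k = rotAt act (⇑γ.1) k ((1 : ℝ) + s)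
    rw [zero_add, add_comm (1 : ℝ) s, rotAt_add_one act hmul]⟩

lemma rotP_cont (k : G) (s : ℝ) :
    Continuous fun γ : PSp act k => rotP act hcont hmul k s γ := by
  have h1 : Continuous fun γ : PSp act k =>
      ((rotP act hcont hmul k s γ).1 : C(unitInterval, M)) :=
    ContinuousMap.continuous_of_continuous_uncurry _ (rot_cont act hcont hmul k s)
  exact h1.subtype_mk _

end contSec
end aux

/-- the ℝ-action `s·(γ, k) := (s·γ, k)` on P_G(M) descends to a well-defined
continuous action of ℝ on the orbit space P_G(M)/G, and this induced action factors through
ℝ/ℤ: for every (γ, k) ∈ P_G(M), the elements 1·(γ, k) and (γ, k) lie in the same G-orbit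
(indeed 1·(γ,k) = (γ,k)·k), so P_G(M)/G carries a natural action of the circle S¹ = ℝ/ℤ. -/
theorem circle_action_on_orbit_space_of_twisted_loops
    {M G : Type*} [TopologicalSpace M] [Group G]
    (act : M → G → M)
    (hcont : ∀ g : G, Continuous fun x => act x g)
    (hone : ∀ x, act x 1 = x)
    (hmul : ∀ x g h, act (act x g) h = act x (g * h)) :
    -- S is the ℝ-action on P_G(M) = Σ g, P_g(M), given componentwise by rotFn
    ∃ S : ℝ → (Σ g : G, PSp act g) → (Σ g : G, PSp act g),
      (∀ s p, (S s p).1 = p.1) ∧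
      (∀ s p t, (S s p).2.1 t = rotFn act p.1 s ⇑p.2.1 t) ∧
      -- 1·(γ,k) = (γ,k)·k : they are G-related via the element k = p.1
      (∀ p, rG act p (S 1 p)) ∧
      -- the action descends to a well-defined continuous ℝ-action on P_G(M)/G ...
      ∃ A : ℝ → Quot (rG act) → Quot (rG act),
        (∀ s p, A s (Quot.mk _ p) = Quot.mk _ (S s p)) ∧
        (∀ s, Continuous (A s)) ∧
        (∀ q, A 0 q = q) ∧
        (∀ s s' q, A s (A s' q) = A (s + s') q) ∧
        -- ... and factors through ℝ/ℤ
        (∀ q, A 1 q = q) ∧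
        (∀ s q, A (s + 1) q = A s q) := by
  classical
  set S : ℝ → (Σ g : G, PSp act g) → (Σ g : G, PSp act g) :=
    fun s p => ⟨p.1, rotP act hcont hmul p.1 s p.2⟩ with hSdef
  -- basic pointwise facts about S
  have hS0 : ∀ p, S 0 p = p := by
    rintro ⟨g, γ⟩
    refine congrArg (Sigma.mk g) (Subtype.ext (ContinuousMap.ext fun t => ?_))
    show rotAt act (⇑γ.1) g ((t : ℝ) + 0) = γ.1 t
    rw [add_zero, rotAt_coe act hone g γ t]
  have hScomp : ∀ s s' p, S s (S s' p) = S (s + s') p := by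
    rintro s s' ⟨g, γ⟩
    refine congrArg (Sigma.mk g) (Subtype.ext (ContinuousMap.ext fun t => ?_))
    show rotAt act (fun u : unitInterval => rotAt act (⇑γ.1) g ((u : ℝ) + s')) g ((t : ℝ) + s)
        = rotAt act (⇑γ.1) g ((t : ℝ) + (s + s'))
    rw [rotAt_rot act hone hmul, add_assoc]
  have hS1 : ∀ p, rG act p (S 1 p) := by
    rintro ⟨g, γ⟩
    refine ⟨g, by show g = g⁻¹ * g * g; group, fun t => ?_⟩
    show rotAt act (⇑γ.1) g ((t : ℝ) + 1) = act (γ.1 t) g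
    rw [rotAt_add_one act hmul, rotAt_coe act hone g γ t]
  have hwd : ∀ (s : ℝ) p q, rG act p q → rG act (S s p) (S s q) := by
    rintro s ⟨gp, γp⟩ ⟨gq, γq⟩ ⟨h, h1, h2⟩
    dsimp only at h1 h2
    subst h1
    refine ⟨h, rfl, fun t => ?_⟩
    exact rotAt_conj act hmul (⇑γp.1) (⇑γq.1) gp h h2 _
  refine ⟨S, fun _ _ => rfl, fun _ _ _ => rfl, hS1, ?_⟩
  set A : ℝ → Quot (rG act) → Quot (rG act) :=
    fun s => Quot.lift (fun p => Quot.mk (rG act) (S s p))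
      (fun p q hpq => Quot.sound (hwd s p q hpq)) with hAdef
  refine ⟨A, fun _ _ => rfl, ?_, ?_, ?_, ?_, ?_⟩
  · -- continuity
    intro s
    apply continuous_quot_lift
    refine continuous_quot_mk.comp ?_
    apply continuous_sigma
    intro g
    exact continuous_sigmaMk.comp (rotP_cont act hcont hmul g s)
  · -- A 0 = id
    intro q
    induction q using Quot.ind with
    | _ p => exact congrArg (Quot.mk (rG act)) (hS0 p)
  · -- composition
    intro s s' q
    induction q using Quot.ind with
    | _ p => exact congrArg (Quot.mk (rG act)) (hScomp s s' p)
  · -- A 1 = id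
    intro q
    induction q using Quot.ind with
    | _ p => exact (Quot.sound (hS1 p)).symm
  · -- periodicity
    intro s q
    induction q using Quot.ind with
    | _ p =>
        calc A (s + 1) (Quot.mk _ p) = Quot.mk (rG act) (S (s + 1) p) := rfl
        _ = Quot.mk (rG act) (S s (S 1 p)) := by rw [hScomp]
        _ = A s (Quot.mk _ (S 1 p)) := rfl
        _ = A s (Quot.mk _ p) := by rw [← Quot.sound (hS1 p)]
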